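/- Let $a = (a_0,\ldots,a_{n+1}),\ x = (x_0,\ldots,x_{n+1}) \in \Delta^{n+1,u}$ and let $1 \le k \le n+1$ satisfy $a_k + \cdots + a_{n+1} \le x_{n+1} < a_{k-1} + \cdots + a_{n+1}$. Then $a \le_s x$ in $\Delta^{n+1,u}$ if and only if $(a_0,\ldots,a_{k-2},\ a_{k-1}+\cdots+a_{n+1} - x_{n+1},\ 0,\ldots,0) \le_s (x_0,\ldots,x_n)$ in $\Delta^{n,u-x_{n+1}}$. -/

import Mathlib

open Finset

/-- Dimension reduction for first order stochastic dominance. -/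
theorem fosd_dim_reduction (n : ℕ) (u : ℝ) (hu : 0 < u) (a x : ℕ → ℝ)
    (ha0 : ∀ i ≤ n + 1, 0 ≤ a i) (has : ∑ i ∈ Finset.range (n + 2), a i = u)
    (hx0 : ∀ i ≤ n + 1, 0 ≤ x i) (hxs : ∑ i ∈ Finset.range (n + 2), x i = u)
    (k : ℕ) (hk1 : 1 ≤ k) (hk2 : k ≤ n + 1)
    (h1 : ∑ i ∈ Finset.Icc k (n + 1), a i ≤ x (n + 1))
    (h2 : x (n + 1) < ∑ i ∈ Finset.Icc (k - 1) (n + 1), a i)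
    (m : ℕ → ℝ)
    (hm : ∀ i, m i = if i < k - 1 then a i
      else if i = k - 1 then (∑ j ∈ Finset.Icc (k - 1) (n + 1), a j) - x (n + 1)
      else 0) :
    (∀ j ≤ n + 1, ∑ i ∈ Finset.Icc j (n + 1), a i ≤ ∑ i ∈ Finset.Icc j (n + 1), x i) ↔
    (∀ j ≤ n, ∑ i ∈ Finset.Icc j n, m i ≤ ∑ i ∈ Finset.Icc j n, x i) := by
  obtain ⟨K, rfl⟩ : ∃ K, k = K + 1 := ⟨k - 1, (Nat.succ_pred_eq_of_pos hk1).symm⟩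
  simp only [Nat.add_sub_cancel] at h2 hm
  have hKn : K ≤ n := by omega
  have key : ∀ j ≤ K, ∑ i ∈ Finset.Icc j n, m i
      = ∑ i ∈ Finset.Icc j (n + 1), a i - x (n + 1) := by
    intro j hj
    rw [← Finset.Ico_add_one_right_eq_Icc j n, ← Finset.sum_Ico_consecutive _ (by omega : j ≤ K + 1)
      (by omega : K + 1 ≤ n + 1)]
    have hz : ∑ i ∈ Finset.Ico (K + 1) (n + 1), m i = 0 := by
      apply Finset.sum_eq_zero
      intro i hi
      simp only [Finset.mem_Ico] at hi
      rw [hm]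
      rw [if_neg (by omega), if_neg (by omega)]
    rw [hz, add_zero, Finset.sum_Ico_succ_top hj]
    have hmK : m K = ∑ i ∈ Finset.Icc K (n + 1), a i - x (n + 1) := by
      rw [hm, if_neg (by omega), if_pos rfl]
    have ha' : ∀ i ∈ Finset.Ico j K, m i = a i := by
      intro i hi
      simp only [Finset.mem_Ico] at hi
      rw [hm, if_pos hi.2]
    rw [Finset.sum_congr rfl ha', hmK]
    rw [← Finset.Ico_add_one_right_eq_Icc j (n + 1), ← Finset.sum_Ico_consecutive a (by omega : j ≤ K)
      (by omega : K ≤ n + 1 + 1), Finset.Ico_add_one_right_eq_Icc K (n + 1)]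
    ring
  have hxtop : ∀ j, j ≤ n + 1 → ∑ i ∈ Finset.Icc j n, x i
      = ∑ i ∈ Finset.Icc j (n + 1), x i - x (n + 1) := by
    intro j hj
    rw [Finset.sum_Icc_succ_top hj]
    ring
  constructor
  · intro h j hj
    by_cases hjK : j ≤ K
    · rw [key j hjK, hxtop j (by omega)]
      linarith [h j (by omega)]
    · have hz : ∑ i ∈ Finset.Icc j n, m i = 0 := by
        apply Finset.sum_eq_zero
        intro i hi
        simp only [Finset.mem_Icc] at hi
        rw [hm, if_neg (by omega), if_neg (by omega)]
      rw [hz]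
      apply Finset.sum_nonneg
      intro i hi
      simp only [Finset.mem_Icc] at hi
      exact hx0 i (by omega)
  · intro h j hj
    by_cases hjK : j ≤ K
    · have := h j (by omega)
      rw [key j hjK, hxtop j (by omega)] at this
      linarith
    · have hsub : ∑ i ∈ Finset.Icc j (n + 1), a i ≤ ∑ i ∈ Finset.Icc (K + 1) (n + 1), a i := by
        apply Finset.sum_le_sum_of_subset_of_nonneg
        · apply Finset.Icc_subset_Icc_left (by omega)
        · intro i hi _
          simp only [Finset.mem_Icc] at hi
          exact ha0 i hi.2
      have hxle : x (n + 1) ≤ ∑ i ∈ Finset.Icc j (n + 1), x i := by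
        apply Finset.single_le_sum (f := x)
        · intro i hi
          simp only [Finset.mem_Icc] at hi
          exact hx0 i hi.2
        · simp only [Finset.mem_Icc]; omega
      linarith
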